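/- Let x, y, z be real sequences on {1,...,n}, each with population mean zero. Under complete randomization of n_A units into treatment group A, E[x̄_A ȳ_A z̄_A] = N_AAA · (1/n) ∑_{i=1}^n x_i y_i z_i, where N_AAA = (n/n_A³)·( n_A/n − 3n_A(n_A−1)/(n(n−1)) + 2n_A(n_A−1)(n_A−2)/(n(n−1)(n−2)) ). -/

import Mathlib

open Finset

noncomputable def dd (n nA m : ℕ) : ℝ := if m ≤ nA then ((n - m).choose (nA - m) : ℝ) else 0

lemma count_supersets {α : Type*} [DecidableEq α] (u s : Finset α) (hs : s ⊆ u) (k : ℕ)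
    (hk : s.card ≤ k) :
    ((powersetCard k u).filter (fun A => s ⊆ A)).card
      = (u.card - s.card).choose (k - s.card) := by
  rw [← Finset.card_sdiff_of_subset hs, ← Finset.card_powersetCard]
  apply Finset.card_bij' (fun A _ => A \ s) (fun B _ => B ∪ s)
  · intro A hA
    simp only [mem_filter, mem_powersetCard] at hA
    simp only [mem_powersetCard]
    exact ⟨sdiff_subset_sdiff hA.1.1 le_rfl, by rw [card_sdiff_of_subset hA.2, hA.1.2]⟩
  · intro B hB
    simp only [mem_powersetCard] at hB
    simp only [mem_filter, mem_powersetCard]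
    have hBs : Disjoint B s := disjoint_of_subset_left hB.1 sdiff_disjoint
    refine ⟨⟨union_subset (hB.1.trans (sdiff_subset)) hs, ?_⟩, subset_union_right⟩
    rw [card_union_of_disjoint hBs, hB.2]
    have := card_le_card hs
    omega
  · intro A hA
    simp only [mem_filter] at hA
    rw [sdiff_union_of_subset hA.2]
  · intro B hB
    simp only [mem_powersetCard] at hB
    have hBs : Disjoint B s := disjoint_of_subset_left hB.1 sdiff_disjoint
    rw [union_sdiff_right, sdiff_eq_self_of_disjoint hBs]

lemma count_supersets_zero {α : Type*} [DecidableEq α] (u s : Finset α) (k : ℕ)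
    (hk : k < s.card) :
    ((powersetCard k u).filter (fun A => s ⊆ A)).card = 0 := by
  rw [Finset.card_eq_zero, Finset.filter_eq_empty_iff]
  intro A hA
  rw [mem_powersetCard] at hA
  intro hsA
  have := Finset.card_le_card hsA
  omega

lemma count_eq_dd (n nA : ℕ) (s : Finset (Fin n)) :
    (((powersetCard nA (univ : Finset (Fin n))).filter (fun A => s ⊆ A)).card : ℝ)
      = dd n nA s.card := by
  unfold dd
  by_cases h : s.card ≤ nA
  · rw [if_pos h, count_supersets _ _ (subset_univ s) _ h, card_univ, Fintype.card_fin]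
  · rw [if_neg h, count_supersets_zero _ _ _ (by omega), Nat.cast_zero]

lemma dd_decomp (n nA : ℕ) (i j k : Fin n) :
    dd n nA ({i, j, k} : Finset (Fin n)).card
      = dd n nA 3
        + (dd n nA 2 - dd n nA 3) *
            ((if i = j then (1:ℝ) else 0) + (if i = k then (1:ℝ) else 0)
              + (if j = k then (1:ℝ) else 0))
        + (dd n nA 1 - 3 * dd n nA 2 + 2 * dd n nA 3) *
            ((if i = j then (1:ℝ) else 0) * (if i = k then (1:ℝ) else 0)) := by
  by_cases hij : i = j <;> by_cases hik : i = k
  · subst hij hik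
    have hc : ({i, i, i} : Finset (Fin n)).card = 1 := by simp
    rw [hc]
    simp only [eq_self_iff_true, if_true]
    ring
  · subst hij
    have hc : ({i, i, k} : Finset (Fin n)).card = 2 := by
      rw [Finset.insert_idem, Finset.card_insert_of_notMem (by simp [hik]),
        Finset.card_singleton]
    rw [hc]
    simp only [eq_self_iff_true, if_true, if_neg hik]
    ring
  · subst hik
    have hji : ¬ j = i := fun h => hij h.symm
    have hc : ({i, j, i} : Finset (Fin n)).card = 2 := by
      rw [show ({i, j, i} : Finset (Fin n)) = {i, j} by ext a; simp; tauto,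
        Finset.card_insert_of_notMem (by simp [hij]), Finset.card_singleton]
    rw [hc]
    simp only [eq_self_iff_true, if_true, if_neg hij, if_neg hji]
    ring
  · by_cases hjk : j = k
    · subst hjk
      have hc : ({i, j, j} : Finset (Fin n)).card = 2 := by
        simp [hij]
      rw [hc]
      simp only [eq_self_iff_true, if_true, if_neg hij, if_neg hik]
      ring
    · have hc : ({i, j, k} : Finset (Fin n)).card = 3 := by
        rw [Finset.card_insert_of_notMem (by simp [hij, hik]),
          Finset.card_insert_of_notMem (by simp [hjk]), Finset.card_singleton]
      rw [hc]
      simp only [if_neg hij, if_neg hik, if_neg hjk]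
      ring

lemma sum_expand (n nA : ℕ) (x y z : Fin n → ℝ) :
    (∑ A ∈ Finset.powersetCard nA (Finset.univ : Finset (Fin n)),
        (∑ i ∈ A, x i) * (∑ i ∈ A, y i) * (∑ i ∈ A, z i))
    = ∑ i, ∑ j, ∑ k, x i * y j * z k *
        (((Finset.powersetCard nA (Finset.univ : Finset (Fin n))).filter
            (fun A => ({i, j, k} : Finset (Fin n)) ⊆ A)).card : ℝ) := by
  have expand : ∀ A ∈ Finset.powersetCard nA (Finset.univ : Finset (Fin n)),
      (∑ i ∈ A, x i) * (∑ i ∈ A, y i) * (∑ i ∈ A, z i)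
      = ∑ i, ∑ j, ∑ k, (if ({i,j,k} : Finset (Fin n)) ⊆ A then x i * y j * z k else 0) := by
    intro A _
    have hx' : (∑ i ∈ A, x i) = ∑ i, if i ∈ A then x i else 0 := by
      rw [Finset.sum_ite_mem, univ_inter]
    have hy' : (∑ i ∈ A, y i) = ∑ i, if i ∈ A then y i else 0 := by
      rw [Finset.sum_ite_mem, univ_inter]
    have hz' : (∑ i ∈ A, z i) = ∑ i, if i ∈ A then z i else 0 := by
      rw [Finset.sum_ite_mem, univ_inter]
    rw [hx', hy', hz', Finset.sum_mul_sum, Finset.sum_mul]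
    refine Finset.sum_congr rfl fun i _ => ?_
    rw [Finset.sum_mul]
    refine Finset.sum_congr rfl fun j _ => ?_
    rw [Finset.mul_sum]
    refine Finset.sum_congr rfl fun k _ => ?_
    simp only [Finset.insert_subset_iff, Finset.singleton_subset_iff]
    by_cases hi : i ∈ A <;> by_cases hj : j ∈ A <;> by_cases hk : k ∈ A <;>
      simp [hi, hj, hk]
  rw [Finset.sum_congr rfl expand]
  rw [Finset.sum_comm]
  refine Finset.sum_congr rfl fun i _ => ?_
  rw [Finset.sum_comm]
  refine Finset.sum_congr rfl fun j _ => ?_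
  rw [Finset.sum_comm]
  refine Finset.sum_congr rfl fun k _ => ?_
  rw [Finset.sum_ite, Finset.sum_const_zero, add_zero, Finset.sum_const, nsmul_eq_mul,
    mul_comm]

lemma triple_sum_eval (n : ℕ) (x y z : Fin n → ℝ) (D1 D2 D3 : ℝ)
    (hx : ∑ i, x i = 0) (hy : ∑ i, y i = 0) (hz : ∑ i, z i = 0) :
    (∑ i, ∑ j, ∑ k, x i * y j * z k *
        (D3 + (D2 - D3) *
            ((if i = j then (1:ℝ) else 0) + (if i = k then (1:ℝ) else 0)
              + (if j = k then (1:ℝ) else 0))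
          + (D1 - 3 * D2 + 2 * D3) *
            ((if i = j then (1:ℝ) else 0) * (if i = k then (1:ℝ) else 0))))
    = (D1 - 3 * D2 + 2 * D3) * ∑ i, x i * y i * z i := by
  have h0 : (∑ i, ∑ j, ∑ k, x i * y j * z k * D3) = 0 := by
    have : ∀ i j : Fin n, (∑ k, x i * y j * z k * D3) = 0 := by
      intro i j
      rw [show (∑ k, x i * y j * z k * D3) = (x i * y j * D3) * ∑ k, z k from by
        rw [Finset.mul_sum]; exact Finset.sum_congr rfl fun k _ => by ring, hz, mul_zero]
    rw [Finset.sum_congr rfl fun i _ => Finset.sum_congr rfl fun j _ => this i j]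
    simp
  have h1 : (∑ i, ∑ j, ∑ k, x i * y j * z k * ((D2 - D3) * (if i = j then (1:ℝ) else 0))) = 0 := by
    have : ∀ i j : Fin n,
        (∑ k, x i * y j * z k * ((D2 - D3) * (if i = j then (1:ℝ) else 0))) = 0 := by
      intro i j
      rw [show (∑ k, x i * y j * z k * ((D2 - D3) * (if i = j then (1:ℝ) else 0)))
          = (x i * y j * ((D2 - D3) * (if i = j then (1:ℝ) else 0))) * ∑ k, z k from by
        rw [Finset.mul_sum]; exact Finset.sum_congr rfl fun k _ => by ring, hz, mul_zero]
    rw [Finset.sum_congr rfl fun i _ => Finset.sum_congr rfl fun j _ => this i j]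
    simp
  have h2 : (∑ i, ∑ j, ∑ k, x i * y j * z k * ((D2 - D3) * (if i = k then (1:ℝ) else 0))) = 0 := by
    have inner : ∀ i j : Fin n,
        (∑ k, x i * y j * z k * ((D2 - D3) * (if i = k then (1:ℝ) else 0)))
          = x i * y j * z i * (D2 - D3) := by
      intro i j
      rw [show (∑ k, x i * y j * z k * ((D2 - D3) * (if i = k then (1:ℝ) else 0)))
          = ∑ k, (if i = k then x i * y j * z k * (D2 - D3) else 0) from
        Finset.sum_congr rfl fun k _ => by by_cases h : i = k <;> simp [h]]
      rw [Finset.sum_ite_eq]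
      simp
    have mid : ∀ i : Fin n,
        (∑ j, ∑ k, x i * y j * z k * ((D2 - D3) * (if i = k then (1:ℝ) else 0))) = 0 := by
      intro i
      rw [Finset.sum_congr rfl fun j _ => inner i j]
      rw [show (∑ j, x i * y j * z i * (D2 - D3))
          = (x i * z i * (D2 - D3)) * ∑ j, y j from by
        rw [Finset.mul_sum]; exact Finset.sum_congr rfl fun j _ => by ring, hy, mul_zero]
    rw [Finset.sum_congr rfl fun i _ => mid i]
    simp
  have h3 : (∑ i, ∑ j, ∑ k, x i * y j * z k * ((D2 - D3) * (if j = k then (1:ℝ) else 0))) = 0 := by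
    have inner : ∀ i j : Fin n,
        (∑ k, x i * y j * z k * ((D2 - D3) * (if j = k then (1:ℝ) else 0)))
          = x i * y j * z j * (D2 - D3) := by
      intro i j
      rw [show (∑ k, x i * y j * z k * ((D2 - D3) * (if j = k then (1:ℝ) else 0)))
          = ∑ k, (if j = k then x i * y j * z k * (D2 - D3) else 0) from
        Finset.sum_congr rfl fun k _ => by by_cases h : j = k <;> simp [h]]
      rw [Finset.sum_ite_eq]
      simp
    rw [Finset.sum_congr rfl fun i _ => Finset.sum_congr rfl fun j _ => inner i j]
    have fac : ∀ i : Fin n, (∑ j, x i * y j * z j * (D2 - D3))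
        = x i * ∑ j, y j * z j * (D2 - D3) := fun i => by
      rw [Finset.mul_sum]; exact Finset.sum_congr rfl fun j _ => by ring
    rw [Finset.sum_congr rfl fun i _ => fac i, ← Finset.sum_mul, hx, zero_mul]
  have h4 : (∑ i, ∑ j, ∑ k, x i * y j * z k * ((D1 - 3 * D2 + 2 * D3) *
        ((if i = j then (1:ℝ) else 0) * (if i = k then (1:ℝ) else 0))))
      = (D1 - 3 * D2 + 2 * D3) * ∑ i, x i * y i * z i := by
    have inner : ∀ i j : Fin n,
        (∑ k, x i * y j * z k * ((D1 - 3 * D2 + 2 * D3) *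
            ((if i = j then (1:ℝ) else 0) * (if i = k then (1:ℝ) else 0))))
          = x i * y j * z i * (D1 - 3 * D2 + 2 * D3) * (if i = j then (1:ℝ) else 0) := by
      intro i j
      rw [show (∑ k, x i * y j * z k * ((D1 - 3 * D2 + 2 * D3) *
            ((if i = j then (1:ℝ) else 0) * (if i = k then (1:ℝ) else 0))))
          = ∑ k, (if i = k then x i * y j * z k * (D1 - 3 * D2 + 2 * D3) *
              (if i = j then (1:ℝ) else 0) else 0) from
        Finset.sum_congr rfl fun k _ => by by_cases h : i = k <;> simp [h]]
      rw [Finset.sum_ite_eq]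
      simp
    have mid : ∀ i : Fin n,
        (∑ j, ∑ k, x i * y j * z k * ((D1 - 3 * D2 + 2 * D3) *
            ((if i = j then (1:ℝ) else 0) * (if i = k then (1:ℝ) else 0))))
          = x i * y i * z i * (D1 - 3 * D2 + 2 * D3) := by
      intro i
      rw [Finset.sum_congr rfl fun j _ => inner i j]
      rw [show (∑ j, x i * y j * z i * (D1 - 3 * D2 + 2 * D3) * (if i = j then (1:ℝ) else 0))
          = ∑ j, (if i = j then x i * y j * z i * (D1 - 3 * D2 + 2 * D3) else 0) from
        Finset.sum_congr rfl fun j _ => by by_cases h : i = j <;> simp [h]]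
      rw [Finset.sum_ite_eq]
      simp
    rw [Finset.sum_congr rfl fun i _ => mid i, Finset.mul_sum]
    exact Finset.sum_congr rfl fun i _ => by ring
  calc (∑ i, ∑ j, ∑ k, x i * y j * z k *
        (D3 + (D2 - D3) *
            ((if i = j then (1:ℝ) else 0) + (if i = k then (1:ℝ) else 0)
              + (if j = k then (1:ℝ) else 0))
          + (D1 - 3 * D2 + 2 * D3) *
            ((if i = j then (1:ℝ) else 0) * (if i = k then (1:ℝ) else 0))))
      = (∑ i, ∑ j, ∑ k, (x i * y j * z k * D3
          + x i * y j * z k * ((D2 - D3) * (if i = j then (1:ℝ) else 0))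
          + x i * y j * z k * ((D2 - D3) * (if i = k then (1:ℝ) else 0))
          + x i * y j * z k * ((D2 - D3) * (if j = k then (1:ℝ) else 0))
          + x i * y j * z k * ((D1 - 3 * D2 + 2 * D3) *
              ((if i = j then (1:ℝ) else 0) * (if i = k then (1:ℝ) else 0))))) := by
        refine Finset.sum_congr rfl fun i _ => Finset.sum_congr rfl fun j _ =>
          Finset.sum_congr rfl fun k _ => by ring
    _ = (D1 - 3 * D2 + 2 * D3) * ∑ i, x i * y i * z i := by
        simp only [Finset.sum_add_distrib]
        rw [h0, h1, h2, h3, h4]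
        ring

/-- For zero-mean `x, y, z`, `E[x̄_A ȳ_A z̄_A] = N_AAA · (1/n) ∑ x_i y_i z_i`. -/
theorem stmt4 (n nA : ℕ) (hn : 3 ≤ n) (h1 : 1 ≤ nA) (h2 : nA ≤ n)
    (x y z : Fin n → ℝ)
    (hx : ∑ i, x i = 0) (hy : ∑ i, y i = 0) (hz : ∑ i, z i = 0) :
    (∑ A ∈ Finset.powersetCard nA (Finset.univ : Finset (Fin n)),
        ((nA : ℝ)⁻¹ * ∑ i ∈ A, x i) * ((nA : ℝ)⁻¹ * ∑ i ∈ A, y i) *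
          ((nA : ℝ)⁻¹ * ∑ i ∈ A, z i)) /
      ((Finset.powersetCard nA (Finset.univ : Finset (Fin n))).card : ℝ)
    = ((n : ℝ) / (nA : ℝ) ^ 3) *
        ((nA : ℝ) / n - 3 * nA * ((nA : ℝ) - 1) / ((n : ℝ) * ((n : ℝ) - 1))
          + 2 * nA * ((nA : ℝ) - 1) * ((nA : ℝ) - 2) /
              ((n : ℝ) * ((n : ℝ) - 1) * ((n : ℝ) - 2))) *
        ((n : ℝ)⁻¹ * ∑ i, x i * y i * z i) := by
  have key : ∀ N K : ℕ, 1 ≤ K → K ≤ N → N * (N - 1).choose (K - 1) = N.choose K * K := by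
    intro N K hK hKN
    have h := Nat.add_one_mul_choose_eq (N - 1) (K - 1)
    rwa [show N - 1 + 1 = N by omega, show K - 1 + 1 = K by omega] at h
  have hn0 : (n : ℝ) ≠ 0 := by positivity
  have hn3 : (3 : ℝ) ≤ (n : ℝ) := by exact_mod_cast hn
  have hn1 : (n : ℝ) - 1 ≠ 0 := by linarith
  have hn2 : (n : ℝ) - 2 ≠ 0 := by linarith
  have hnA0 : (nA : ℝ) ≠ 0 := by positivity
  have hC0 : ((n.choose nA : ℕ) : ℝ) ≠ 0 := by
    exact_mod_cast (Nat.choose_pos h2).ne'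
  have cn1 : ((n - 1 : ℕ) : ℝ) = (n : ℝ) - 1 := by
    push_cast [Nat.cast_sub (show 1 ≤ n by omega)]; ring
  have cn2 : ((n - 2 : ℕ) : ℝ) = (n : ℝ) - 2 := by
    push_cast [Nat.cast_sub (show 2 ≤ n by omega)]; ring
  have e1 : dd n nA 1 = (n.choose nA : ℝ) * nA / n := by
    rw [eq_div_iff hn0, dd, if_pos h1]
    have hnat := key n nA h1 h2
    have := congrArg (fun m : ℕ => (m : ℝ)) hnat
    push_cast at this
    linarith [this]
  have e2 : dd n nA 2 = (n.choose nA : ℝ) * ((nA : ℝ) * ((nA : ℝ) - 1)) / ((n : ℝ) * ((n : ℝ) - 1)) := by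
    by_cases hA2 : 2 ≤ nA
    · rw [eq_div_iff (mul_ne_zero hn0 hn1), dd, if_pos hA2]
      have k1 := key n nA h1 h2
      have k2 := key (n - 1) (nA - 1) (by omega) (by omega)
      rw [show n - 1 - 1 = n - 2 by omega, show nA - 1 - 1 = nA - 2 by omega] at k2
      have hnat : n * (n - 1) * ((n - 2).choose (nA - 2))
          = n.choose nA * (nA * (nA - 1)) := by
        calc n * (n - 1) * ((n - 2).choose (nA - 2))
            = n * ((n - 1) * (n - 2).choose (nA - 2)) := by ring
          _ = n * ((n - 1).choose (nA - 1) * (nA - 1)) := by rw [k2]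
          _ = n * (n - 1).choose (nA - 1) * (nA - 1) := by ring
          _ = n.choose nA * nA * (nA - 1) := by rw [k1]
          _ = _ := by ring
      have := congrArg (fun m : ℕ => (m : ℝ)) hnat
      push_cast [cn1, cn2, Nat.cast_sub h1] at this
      linarith [this]
    · have hA1 : nA = 1 := by omega
      subst hA1
      rw [dd, if_neg (by omega)]
      norm_num
  have e3 : dd n nA 3 = (n.choose nA : ℝ) *
      ((nA : ℝ) * ((nA : ℝ) - 1) * ((nA : ℝ) - 2)) /
      ((n : ℝ) * ((n : ℝ) - 1) * ((n : ℝ) - 2)) := by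
    by_cases hA3 : 3 ≤ nA
    · rw [eq_div_iff (mul_ne_zero (mul_ne_zero hn0 hn1) hn2), dd, if_pos hA3]
      have k1 := key n nA h1 h2
      have k2 := key (n - 1) (nA - 1) (by omega) (by omega)
      rw [show n - 1 - 1 = n - 2 by omega, show nA - 1 - 1 = nA - 2 by omega] at k2
      have k3 := key (n - 2) (nA - 2) (by omega) (by omega)
      rw [show n - 2 - 1 = n - 3 by omega, show nA - 2 - 1 = nA - 3 by omega] at k3
      have hnat : n * (n - 1) * (n - 2) * ((n - 3).choose (nA - 3))
          = n.choose nA * (nA * (nA - 1) * (nA - 2)) := by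
        calc n * (n - 1) * (n - 2) * ((n - 3).choose (nA - 3))
            = n * (n - 1) * ((n - 2) * (n - 3).choose (nA - 3)) := by ring
          _ = n * (n - 1) * ((n - 2).choose (nA - 2) * (nA - 2)) := by rw [k3]
          _ = n * ((n - 1) * (n - 2).choose (nA - 2)) * (nA - 2) := by ring
          _ = n * ((n - 1).choose (nA - 1) * (nA - 1)) * (nA - 2) := by rw [k2]
          _ = n * (n - 1).choose (nA - 1) * (nA - 1) * (nA - 2) := by ring
          _ = n.choose nA * nA * (nA - 1) * (nA - 2) := by rw [k1]
          _ = _ := by ring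
      have cn3 : ((n - 3 : ℕ) : ℝ) = (n : ℝ) - 3 := by
        push_cast [Nat.cast_sub (show 3 ≤ n by omega)]; ring
      have := congrArg (fun m : ℕ => (m : ℝ)) hnat
      push_cast [cn1, cn2, cn3, Nat.cast_sub h1, Nat.cast_sub (show 2 ≤ nA by omega)] at this
      linarith [this]
    · rw [dd, if_neg hA3]
      have : nA = 1 ∨ nA = 2 := by omega
      rcases this with h | h <;> subst h <;> norm_num
  have hP : ((Finset.powersetCard nA (Finset.univ : Finset (Fin n))).card : ℝ)
      = (n.choose nA : ℝ) := by
    rw [Finset.card_powersetCard, card_univ, Fintype.card_fin]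
  have hnum : (∑ A ∈ Finset.powersetCard nA (Finset.univ : Finset (Fin n)),
        ((nA : ℝ)⁻¹ * ∑ i ∈ A, x i) * ((nA : ℝ)⁻¹ * ∑ i ∈ A, y i) *
          ((nA : ℝ)⁻¹ * ∑ i ∈ A, z i))
      = ((nA : ℝ)⁻¹) ^ 3 * ∑ A ∈ Finset.powersetCard nA (Finset.univ : Finset (Fin n)),
          (∑ i ∈ A, x i) * (∑ i ∈ A, y i) * (∑ i ∈ A, z i) := by
    rw [Finset.mul_sum]
    exact Finset.sum_congr rfl fun A _ => by ring
  have hT : (∑ A ∈ Finset.powersetCard nA (Finset.univ : Finset (Fin n)),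
        (∑ i ∈ A, x i) * (∑ i ∈ A, y i) * (∑ i ∈ A, z i))
      = (dd n nA 1 - 3 * dd n nA 2 + 2 * dd n nA 3) * ∑ i, x i * y i * z i := by
    rw [sum_expand]
    rw [Finset.sum_congr rfl fun i _ => Finset.sum_congr rfl fun j _ =>
      Finset.sum_congr rfl fun k _ => by
        rw [count_eq_dd n nA ({i, j, k} : Finset (Fin n)), dd_decomp n nA i j k]]
    exact triple_sum_eval n x y z (dd n nA 1) (dd n nA 2) (dd n nA 3) hx hy hz
  rw [hnum, hT, hP, e1, e2, e3]
  field_simp
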